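/- Triviality of the intersection: let {V^M_j}_{j∈ℤ} be closed subspaces of L²(ℝ) such that V^M_j ⊂ V^M_{j+1}, and for each j the family {φ^M_{j,k}}_{k∈ℤ} with φ^M_{j,k}(t) = 2^{j/2} φ(2^j t − k) e^{−(i/(2B))(At²+Dp²−Ak²)} is a Riesz basis of V^M_j with uniform bounds 0 < A₁ ≤ A₂ < ∞, where φ ∈ L²(ℝ). Then ⋂_{j∈ℤ} V^M_j = {0}. -/

import Mathlib

open MeasureTheory Complex

/-- The chirped dyadic translate `φ^M_{j,k}(t) = 2^{j/2} φ(2^j t − k) e^{−(i/(2B))(At²+Dp²−Ak²)}`. -/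
noncomputable def chirpDyadic (A B D p : ℝ) (φ : ℝ → ℂ) (j k : ℤ) (t : ℝ) : ℂ :=
  ((2 : ℝ) ^ ((j : ℝ) / 2) : ℝ) * φ ((2 : ℝ) ^ j * t - k) *
    Complex.exp (-(Complex.I / (2 * B)) *
      ((A * t ^ 2 + D * p ^ 2 - A * (k : ℝ) ^ 2 : ℝ) : ℂ))

lemma chirp_norm (A B D p : ℝ) (φ : ℝ → ℂ) (j k : ℤ) (t : ℝ) :
    ‖chirpDyadic A B D p φ j k t‖ = (2 : ℝ) ^ ((j : ℝ) / 2) * ‖φ ((2 : ℝ) ^ j * t - k)‖ := by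
  unfold chirpDyadic
  rw [norm_mul, norm_mul, Complex.norm_exp]
  have : (-(Complex.I / (2 * (B:ℂ))) * ((A * t ^ 2 + D * p ^ 2 - A * (k : ℝ) ^ 2 : ℝ) : ℂ)).re = 0 := by
    simp [Complex.div_re, ← Complex.ofReal_pow]
  rw [this, Real.exp_zero, mul_one, Complex.norm_real, Real.norm_eq_abs,
    abs_of_pos (Real.rpow_pos_of_pos two_pos _)]

open Filter Topology in
lemma decay (φ : ℝ → ℂ) (hφ : MemLp φ 2 (volume : Measure ℝ)) {δ : ℝ} (hδ : 0 < δ) :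
    ∃ w : ℝ, 0 < w ∧ w < 1/2 ∧
      (Summable fun k : ℤ => ∫ u in Set.Icc ((k:ℝ) - w) (k + w), ‖φ u‖^2) ∧
      (∑' k : ℤ, ∫ u in Set.Icc ((k:ℝ) - w) (k + w), ‖φ u‖^2) ≤ δ := by
  have hint : Integrable (fun u : ℝ => ‖φ u‖^2) volume := by
    have := hφ.integrable_norm_rpow two_ne_zero ENNReal.ofNat_ne_top
    simpa [ENNReal.toReal_ofNat, Real.rpow_natCast] using this
  set w : ℕ → ℝ := fun n => (2:ℝ)⁻¹ ^ (n+2) with hw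
  have hwpos : ∀ n, 0 < w n := fun n => pow_pos (by norm_num) _
  have hwlt : ∀ n, w n < 1/2 := by
    intro n
    calc w n ≤ (2:ℝ)⁻¹ ^ 2 := pow_le_pow_of_le_one (by norm_num) (by norm_num) (by omega)
    _ < 1/2 := by norm_num
  set S : ℕ → Set ℝ := fun n => ⋃ k : ℤ, Set.Icc ((k:ℝ) - w n) (k + w n) with hS
  have hmeas : ∀ n, MeasurableSet (S n) :=
    fun n => MeasurableSet.iUnion fun k => measurableSet_Icc
  have hdisj : ∀ n, Pairwise (Function.onFun Disjoint
      (fun k : ℤ => Set.Icc ((k:ℝ) - w n) (k + w n))) := by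
    intro n k l hkl
    rw [Function.onFun, Set.disjoint_left]
    rintro x ⟨h1, h2⟩ ⟨h3, h4⟩
    have : |(k:ℝ) - l| < 1 := by
      have := hwlt n
      rw [abs_sub_lt_iff]; constructor <;> linarith
    have : (1:ℝ) ≤ |(k:ℝ) - l| := by
      rw [← Int.cast_sub, ← Int.cast_abs]
      exact_mod_cast Int.one_le_abs (sub_ne_zero.mpr hkl)
    linarith
  -- tendsto
  have htend : Tendsto (fun n => ∫ u, (S n).indicator (fun v => ‖φ v‖^2) u) atTop (𝓝 0) := by
    have h0 : (0:ℝ) = ∫ u : ℝ, (0:ℝ) := by simp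
    rw [h0]
    apply tendsto_integral_of_dominated_convergence (fun u => ‖φ u‖^2)
      (fun n => hint.aestronglyMeasurable.indicator (hmeas n)) hint
    · intro n
      filter_upwards with u
      by_cases hu : u ∈ S n
      · rw [Set.indicator_of_mem hu, Real.norm_eq_abs]; exact le_of_eq (abs_of_nonneg (sq_nonneg _))
      · rw [Set.indicator_of_notMem hu]; simp only [norm_zero]; exact sq_nonneg _
    · have hnull : (volume : Measure ℝ) (Set.range ((↑) : ℤ → ℝ)) = 0 := by
        apply Set.Countable.measure_zero
        exact Set.countable_range _
      filter_upwards [measure_eq_zero_iff_ae_notMem.mp hnull] with u hu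
      have hd : 0 < |u - round u| := by
        rw [abs_pos, sub_ne_zero]
        intro h
        exact hu ⟨round u, h.symm⟩
      have hev : ∀ᶠ n in atTop, (S n).indicator (fun v => ‖φ v‖^2) u = 0 := by
        have : Tendsto w atTop (𝓝 0) := by
          have := tendsto_pow_atTop_nhds_zero_of_lt_one (by norm_num : (0:ℝ) ≤ 2⁻¹)
            (by norm_num : (2:ℝ)⁻¹ < 1)
          exact this.comp (tendsto_add_atTop_nat 2)
        filter_upwards [this.eventually_lt_const hd] with n hn
        rw [Set.indicator_of_notMem]
        intro hmem
        rw [hS] at hmem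
        obtain ⟨k, hk⟩ := Set.mem_iUnion.mp hmem
        have : |u - k| ≤ w n := by
          rw [abs_sub_le_iff]; exact ⟨by linarith [hk.2], by linarith [hk.1]⟩
        exact absurd (le_trans (round_le u k) this) (not_le.mpr hn)
      exact tendsto_const_nhds.congr' (hev.mono fun n h => h.symm)
  obtain ⟨n, hn⟩ := (htend.eventually_lt_const hδ).exists
  refine ⟨w n, hwpos n, hwlt n, ?_, ?_⟩
  · exact ⟨_, hasSum_integral_iUnion (fun k => measurableSet_Icc) (hdisj n)
      (hint.integrableOn)⟩
  · have := (hasSum_integral_iUnion (fun k : ℤ => measurableSet_Icc) (hdisj n)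
      (hint.integrableOn (s := S n))).tsum_eq
    rw [this, (integral_indicator (hmeas n)).symm]
    exact hn.le

lemma inner_chirp (A B D p : ℝ) (φ : ℝ → ℂ) (j k : ℤ)
    (hm : MemLp (chirpDyadic A B D p φ j k) 2 (volume : Measure ℝ))
    (h : Lp ℂ 2 (volume : Measure ℝ)) :
    ∫ t : ℝ, h t * (starRingEnd ℂ) (chirpDyadic A B D p φ j k t) =
      @inner ℂ _ _ (hm.toLp _) h := by
  rw [MeasureTheory.L2.inner_def]
  apply integral_congr_ae
  filter_upwards [hm.coeFn_toLp] with t ht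
  rw [RCLike.inner_apply, ht, mul_comm]

lemma inner_proj {E : Type*} [NormedAddCommGroup E] [InnerProductSpace ℂ E]
    (K : Submodule ℂ E) [K.HasOrthogonalProjection] {v : E} (hv : v ∈ K) (h : E) :
    (inner ℂ v h : ℂ) = inner ℂ v ((K.orthogonalProjectionOnto h : K) : E) := by
  have h0 : (inner ℂ (h - (K.orthogonalProjectionOnto h : K) : E) v : ℂ) = 0 :=
    Submodule.starProjection_inner_eq_zero h v hv
  have : (inner ℂ v (h - (K.orthogonalProjectionOnto h : K) : E) : ℂ) = 0 := by
    rw [← inner_conj_symm, h0, map_zero]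
  rw [inner_sub_right, sub_eq_zero] at this
  exact this

lemma cov (ψ : ℝ → ℝ) (c : ℝ) (hc : 0 < c) (k a b : ℝ) :
    ∫ t in Set.Icc a b, c * ψ (c * t - k) = ∫ u in Set.Icc (c*a - k) (c*b - k), ψ u := by
  have hmem : ∀ t : ℝ, (c*t - k ∈ Set.Icc (c*a-k) (c*b-k)) ↔ t ∈ Set.Icc a b := by
    intro t
    simp only [Set.mem_Icc, sub_le_sub_iff_right, mul_le_mul_iff_right₀ hc]
  rw [← integral_indicator measurableSet_Icc, ← integral_indicator measurableSet_Icc]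
  have key : ∀ t : ℝ, (Set.Icc a b).indicator (fun s => c * ψ (c*s - k)) t
      = c * ((Set.Icc (c*a-k) (c*b-k)).indicator ψ) (c*t - k) := by
    intro t
    by_cases ht : t ∈ Set.Icc a b
    · rw [Set.indicator_of_mem ht, Set.indicator_of_mem ((hmem t).mpr ht)]
    · rw [Set.indicator_of_notMem ht,
        Set.indicator_of_notMem (fun h => ht ((hmem t).mp h)), mul_zero]
  simp_rw [key]
  rw [MeasureTheory.integral_const_mul]
  have h2 := MeasureTheory.Measure.integral_comp_mul_left
    (fun y : ℝ => ((Set.Icc (c*a-k) (c*b-k)).indicator ψ) (y - k)) c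
  rw [show (fun t : ℝ => ((Set.Icc (c*a-k) (c*b-k)).indicator ψ) (c*t - k))
      = (fun t : ℝ => (fun y : ℝ => ((Set.Icc (c*a-k) (c*b-k)).indicator ψ) (y - k)) (c * t))
      from rfl, h2, MeasureTheory.integral_sub_right_eq_self
        (((Set.Icc (c*a-k) (c*b-k))).indicator ψ) k]
  rw [smul_eq_mul, abs_of_pos (inv_pos.mpr hc)]
  field_simp

lemma holder_est (A B D p : ℝ) (φ : ℝ → ℂ) (hφ : MemLp φ 2 (volume : Measure ℝ)) (j k : ℤ)
    (hm : MemLp (chirpDyadic A B D p φ j k) 2 (volume : Measure ℝ))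
    (g : ℝ → ℂ) (hg : MemLp g 2 (volume : Measure ℝ))
    (hgint : Integrable (fun t => ‖g t‖^2) (volume : Measure ℝ)) (R : ℝ) (hR : 0 < R)
    (hsupp : ∀ t ∉ Set.Icc (-R) R, g t = 0) :
    ‖∫ t : ℝ, g t * (starRingEnd ℂ) (chirpDyadic A B D p φ j k t)‖^2 ≤
      (∫ t : ℝ, ‖g t‖^2) *
        ∫ u in Set.Icc ((-k:ℝ) - (2:ℝ)^j * R) ((-k:ℝ) + (2:ℝ)^j * R), ‖φ u‖^2 := by
  set c : ℝ := (2:ℝ)^j with hc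
  have hcpos : 0 < c := zpow_pos two_pos j
  have hφint : Integrable (fun u : ℝ => ‖φ u‖^2) volume := by
    have := hφ.integrable_norm_rpow two_ne_zero ENNReal.ofNat_ne_top
    simpa [Real.rpow_natCast] using this
  -- step 1: bound by integral of norms restricted to Icc
  have step1 : ‖∫ t : ℝ, g t * (starRingEnd ℂ) (chirpDyadic A B D p φ j k t)‖ ≤
      ∫ t in Set.Icc (-R) R, ‖g t‖ * ‖chirpDyadic A B D p φ j k t‖ := by
    refine le_trans (norm_integral_le_integral_norm _) (le_of_eq ?_)
    rw [← setIntegral_eq_integral_of_forall_compl_eq_zero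
      (f := fun t => ‖g t * (starRingEnd ℂ) (chirpDyadic A B D p φ j k t)‖)
      (fun t ht => by beta_reduce; rw [hsupp t ht, zero_mul, norm_zero])]
    refine setIntegral_congr_fun measurableSet_Icc (fun t _ => ?_)
    rw [norm_mul, RCLike.norm_conj]
  -- step 2: Hölder
  have hpq : Real.HolderConjugate 2 2 := Real.HolderConjugate.two_two
  have h2 : (ENNReal.ofReal (2:ℝ)) = 2 := by
    simp [ENNReal.ofReal_ofNat]
  have step2 : ∫ t in Set.Icc (-R) R, ‖g t‖ * ‖chirpDyadic A B D p φ j k t‖ ≤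
      (∫ t in Set.Icc (-R) R, ‖g t‖ ^ (2:ℝ)) ^ (1/(2:ℝ)) *
      (∫ t in Set.Icc (-R) R, ‖chirpDyadic A B D p φ j k t‖ ^ (2:ℝ)) ^ (1/(2:ℝ)) := by
    have hg' : MemLp g (ENNReal.ofReal (2:ℝ)) (volume.restrict (Set.Icc (-R) R)) := by
      rw [h2]; exact hg.restrict _
    have hm' : MemLp (chirpDyadic A B D p φ j k) (ENNReal.ofReal (2:ℝ))
        (volume.restrict (Set.Icc (-R) R)) := by
      rw [h2]; exact hm.restrict _
    exact MeasureTheory.integral_mul_norm_le_Lp_mul_Lq hpq hg' hm'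
  -- nonnegativity facts
  have hgnn : 0 ≤ ∫ t in Set.Icc (-R) R, ‖g t‖ ^ (2:ℝ) :=
    integral_nonneg fun t => Real.rpow_nonneg (norm_nonneg _) _
  have hcnn : 0 ≤ ∫ t in Set.Icc (-R) R, ‖chirpDyadic A B D p φ j k t‖ ^ (2:ℝ) :=
    integral_nonneg fun t => Real.rpow_nonneg (norm_nonneg _) _
  have hprod : ‖∫ t : ℝ, g t * (starRingEnd ℂ) (chirpDyadic A B D p φ j k t)‖^2 ≤
      (∫ t in Set.Icc (-R) R, ‖g t‖ ^ (2:ℝ)) *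
      (∫ t in Set.Icc (-R) R, ‖chirpDyadic A B D p φ j k t‖ ^ (2:ℝ)) := by
    have hnn : (0:ℝ) ≤ ‖∫ t : ℝ, g t * (starRingEnd ℂ) (chirpDyadic A B D p φ j k t)‖ :=
      norm_nonneg _
    have := pow_le_pow_left₀ hnn (le_trans step1 step2) 2
    refine le_trans this (le_of_eq ?_)
    rw [mul_pow, ← Real.rpow_natCast (_ ^ (1/(2:ℝ))) 2, ← Real.rpow_natCast (_ ^ (1/(2:ℝ))) 2,
      ← Real.rpow_mul hgnn, ← Real.rpow_mul hcnn]
    norm_num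
  have hr2 : ∀ x : ℝ, x ^ (2:ℝ) = x ^ (2:ℕ) := fun x => by
    rw [show (2:ℝ) = ((2:ℕ):ℝ) by norm_num, Real.rpow_natCast]
  simp_rw [hr2] at hprod
  have hcsq : ((2:ℝ) ^ ((j:ℝ)/2))^(2:ℕ) = c := by
    rw [← Real.rpow_natCast ((2:ℝ) ^ ((j:ℝ)/2)) 2, ← Real.rpow_mul (by norm_num : (0:ℝ) ≤ 2),
      show (j:ℝ)/2 * ((2:ℕ):ℝ) = ((j:ℤ):ℝ) by push_cast; ring, Real.rpow_intCast, hc]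
  have hcid : (∫ t in Set.Icc (-R) R, ‖chirpDyadic A B D p φ j k t‖^(2:ℕ))
      = ∫ u in Set.Icc ((-k:ℝ) - c * R) ((-k:ℝ) + c * R), ‖φ u‖^2 := by
    have hpt : ∀ t : ℝ, ‖chirpDyadic A B D p φ j k t‖^(2:ℕ)
        = c * (fun u => ‖φ u‖^2) (c * t - k) := by
      intro t
      rw [chirp_norm, mul_pow, hcsq]
    simp_rw [hpt]
    rw [cov (fun u => ‖φ u‖^2) c hcpos k (-R) R,
      show c*(-R) - k = (-k:ℝ) - c*R by ring, show c*R - k = (-k:ℝ) + c*R by ring]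
  rw [hcid] at hprod
  refine le_trans hprod (mul_le_mul_of_nonneg_right ?_ ?_)
  · exact setIntegral_le_integral hgint
      (Filter.Eventually.of_forall fun t => sq_nonneg _)
  · exact integral_nonneg fun u => sq_nonneg _


set_option maxHeartbeats 2000000 in
/-- Triviality of the intersection in a special affine multi-resolution analysis:
if each `V^M_j` is a closed subspace of `L²(ℝ)` admitting `{φ^M_{j,k}}_k` as a Riesz basis
with uniform bounds, and `V^M_j ⊆ V^M_{j+1}`, then `⋂_j V^M_j = {0}`. -/
theorem saMRA_inter_trivial (A B C D p q : ℝ) (hB : B ≠ 0)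
    (φ : ℝ → ℂ) (hφ : MemLp φ 2 (volume : Measure ℝ))
    (V : ℤ → Submodule ℂ (Lp ℂ 2 (volume : Measure ℝ)))
    (hclosed : ∀ j : ℤ, IsClosed (V j : Set (Lp ℂ 2 (volume : Measure ℝ))))
    (hmono : ∀ j : ℤ, V j ≤ V (j + 1))
    (hmem : ∀ j k : ℤ, MemLp (chirpDyadic A B D p φ j k) 2 (volume : Measure ℝ))
    (hbasis : ∀ j k : ℤ, (hmem j k).toLp (chirpDyadic A B D p φ j k) ∈ V j)
    (A₁ A₂ : ℝ) (h₁ : 0 < A₁) (h₁₂ : A₁ ≤ A₂)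
    (hframe : ∀ j : ℤ, ∀ f ∈ V j,
      A₁ * ‖f‖ ^ 2 ≤
          (∑' k : ℤ, ‖∫ t : ℝ, f t * (starRingEnd ℂ) (chirpDyadic A B D p φ j k t)‖ ^ 2) ∧
        (∑' k : ℤ, ‖∫ t : ℝ, f t * (starRingEnd ℂ) (chirpDyadic A B D p φ j k t)‖ ^ 2) ≤
          A₂ * ‖f‖ ^ 2) :
    (⋂ j : ℤ, (V j : Set (Lp ℂ 2 (volume : Measure ℝ)))) = {0} := by
  ext f
  simp only [Set.mem_iInter, SetLike.mem_coe, Set.mem_singleton_iff]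
  constructor
  · intro hf
    by_contra hf0
    have hN : 0 < ‖f‖ := norm_pos_iff.mpr hf0
    have hA₂ : 0 < A₂ := lt_of_lt_of_le h₁ h₁₂
    set η := A₁ * ‖f‖^2 with hη
    have hηpos : 0 < η := mul_pos h₁ (pow_pos hN 2)
    set ε := Real.sqrt (η / (8 * (A₂ + 1))) with hε
    have hεpos : 0 < ε := Real.sqrt_pos.mpr (by positivity)
    have hεsq : ε^2 = η / (8 * (A₂ + 1)) := Real.sq_sqrt (by positivity)
    -- density
    obtain ⟨g, hgsupp, hgapprox, hgcont, hgmem⟩ :=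
      (Lp.memLp f).exists_hasCompactSupport_eLpNorm_sub_le
        ENNReal.ofNat_ne_top (ENNReal.ofReal_pos.mpr hεpos).ne'
    set gL := hgmem.toLp g with hgL
    have hdist : ‖f - gL‖ ≤ ε := by
      rw [Lp.norm_def]
      have hcongr : eLpNorm (⇑(f - gL)) 2 volume = eLpNorm (⇑f - g) 2 volume := by
        apply eLpNorm_congr_ae
        filter_upwards [Lp.coeFn_sub f gL, hgmem.coeFn_toLp] with t h1 h2
        rw [h1, Pi.sub_apply, Pi.sub_apply, h2]
      rw [hcongr]
      calc (eLpNorm (⇑f - g) 2 volume).toReal ≤ (ENNReal.ofReal ε).toReal :=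
        ENNReal.toReal_mono ENNReal.ofReal_ne_top hgapprox
      _ = ε := ENNReal.toReal_ofReal hεpos.le
    -- support radius
    obtain ⟨r, hr⟩ := hgsupp.isBounded.subset_closedBall 0
    set R := max r 1 with hR
    have hRpos : (0:ℝ) < R := lt_of_lt_of_le one_pos (le_max_right _ _)
    have hsupp : ∀ t ∉ Set.Icc (-R) R, g t = 0 := by
      intro t ht
      apply image_eq_zero_of_notMem_tsupport
      intro hts
      apply ht
      have := hr hts
      rw [Metric.mem_closedBall, Real.dist_eq, sub_zero] at this
      have h1 : |t| ≤ R := le_trans this (le_max_left _ _)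
      rw [Set.mem_Icc]
      constructor <;> [linarith [neg_abs_le t]; linarith [le_abs_self t]]
    have hgint : Integrable (fun t => ‖g t‖^2) (volume : Measure ℝ) := by
      have h1 : HasCompactSupport (fun t => ‖g t‖^2) := by
        apply hgsupp.mono
        intro t ht
        simp only [Function.mem_support] at ht ⊢
        intro h0
        apply ht
        rw [h0]
        simp
      exact (hgcont.norm.pow 2).integrable_of_hasCompactSupport h1
    set Cg := ∫ t : ℝ, ‖g t‖^2 with hCg
    have hCgnn : 0 ≤ Cg := integral_nonneg fun t => sq_nonneg _
    set δ := η / (4 * (Cg + 1)) with hδ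
    have hδpos : 0 < δ := div_pos hηpos (by linarith)
    obtain ⟨w, hw0, hw12, hsumm, htsum⟩ := decay φ hφ hδpos
    set aA : ℤ → ℝ := fun k => ∫ u in Set.Icc ((k:ℝ) - w) ((k:ℝ) + w), ‖φ u‖^2 with haA
    -- choose scale j
    obtain ⟨m, hm⟩ := exists_pow_lt_of_lt_one (div_pos hw0 hRpos)
      (by norm_num : (1:ℝ)/2 < 1)
    set j : ℤ := -(m:ℤ) with hj
    set c : ℝ := (2:ℝ)^j with hc
    have hcpos : 0 < c := zpow_pos two_pos j
    have hcR : c * R ≤ w := by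
      have hceq : c = (1/2:ℝ)^m := by
        rw [hc, hj, zpow_neg, zpow_natCast, one_div, inv_pow]
      rw [hceq]
      exact le_of_lt ((lt_div_iff₀ hRpos).mp hm)
    -- orthogonal projection setup
    haveI : CompleteSpace (V j) := IsComplete.completeSpace_coe (hclosed j).isComplete
    set h := f - gL with hh
    set Ph : Lp ℂ 2 (volume : Measure ℝ)
      := (((V j).orthogonalProjectionOnto h : ↥(V j)) : Lp ℂ 2 (volume : Measure ℝ)) with hPhdef
    have hPhmem : Ph ∈ V j := SetLike.coe_mem _
    set s : ℤ → ℝ := fun k =>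
      ‖∫ t : ℝ, f t * (starRingEnd ℂ) (chirpDyadic A B D p φ j k t)‖ ^ 2 with hs
    set tt : ℤ → ℝ := fun k =>
      ‖∫ t : ℝ, g t * (starRingEnd ℂ) (chirpDyadic A B D p φ j k t)‖ ^ 2 with htt
    set uu : ℤ → ℝ := fun k =>
      ‖∫ t : ℝ, Ph t * (starRingEnd ℂ) (chirpDyadic A B D p φ j k t)‖ ^ 2 with huu
    -- pointwise splitting
    have hpt : ∀ k : ℤ, s k ≤ 2 * tt k + 2 * uu k := by
      intro k
      have e1 : (∫ t : ℝ, f t * (starRingEnd ℂ) (chirpDyadic A B D p φ j k t))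
          = @inner ℂ _ _ ((hmem j k).toLp _) f := inner_chirp A B D p φ j k (hmem j k) f
      have e2 : (∫ t : ℝ, g t * (starRingEnd ℂ) (chirpDyadic A B D p φ j k t))
          = @inner ℂ _ _ ((hmem j k).toLp _) gL := by
        rw [← inner_chirp A B D p φ j k (hmem j k) gL]
        apply integral_congr_ae
        filter_upwards [hgmem.coeFn_toLp] with t ht
        rw [ht]
      have e3 : (∫ t : ℝ, Ph t * (starRingEnd ℂ) (chirpDyadic A B D p φ j k t))
          = @inner ℂ _ _ ((hmem j k).toLp _) Ph := inner_chirp A B D p φ j k (hmem j k) Ph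
      have hsplit : (@inner ℂ _ _ ((hmem j k).toLp (chirpDyadic A B D p φ j k)) f : ℂ)
          = @inner ℂ _ _ ((hmem j k).toLp _) gL + @inner ℂ _ _ ((hmem j k).toLp _) Ph := by
        have hfgh : f = gL + h := by rw [hh, add_sub_cancel]
        calc (@inner ℂ _ _ ((hmem j k).toLp (chirpDyadic A B D p φ j k)) f : ℂ)
            = @inner ℂ _ _ ((hmem j k).toLp _) (gL + h) := by rw [← hfgh]
        _ = @inner ℂ _ _ ((hmem j k).toLp _) gL + @inner ℂ _ _ ((hmem j k).toLp _) h :=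
            inner_add_right _ _ _
        _ = @inner ℂ _ _ ((hmem j k).toLp _) gL + @inner ℂ _ _ ((hmem j k).toLp _) Ph := by
            rw [inner_proj (V j) (hbasis j k) h]
      have habc : ∀ a b : ℂ, ‖a + b‖^2 ≤ 2*‖a‖^2 + 2*‖b‖^2 := by
        intro a b
        nlinarith [norm_add_le a b, norm_nonneg a, norm_nonneg b, norm_nonneg (a+b),
          sq_nonneg (‖a‖ - ‖b‖), sq_nonneg (‖a‖ + ‖b‖)]
      calc s k = ‖(∫ t : ℝ, f t * (starRingEnd ℂ) (chirpDyadic A B D p φ j k t))‖^2 := by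
            rw [hs]
      _ = ‖(@inner ℂ _ _ ((hmem j k).toLp _) gL : ℂ) + @inner ℂ _ _ ((hmem j k).toLp _) Ph‖^2 := by
            rw [e1, hsplit]
      _ ≤ 2*‖(@inner ℂ _ _ ((hmem j k).toLp (chirpDyadic A B D p φ j k)) gL : ℂ)‖^2
            + 2*‖(@inner ℂ _ _ ((hmem j k).toLp (chirpDyadic A B D p φ j k)) Ph : ℂ)‖^2 :=
            habc _ _
      _ = 2 * tt k + 2 * uu k := by rw [htt, huu]; simp only []; rw [e2, e3]
    -- bound for the projection part
    have hP_le : ‖Ph‖ ≤ ε := by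
      have h1 := ContinuousLinearMap.le_opNorm ((V j).orthogonalProjectionOnto) h
      have h2 := Submodule.orthogonalProjectionOnto_norm_le (V j)
      calc ‖Ph‖ = ‖(V j).orthogonalProjectionOnto h‖ := Submodule.norm_coe _
      _ ≤ ‖(V j).orthogonalProjectionOnto‖ * ‖h‖ := h1
      _ ≤ 1 * ‖h‖ := mul_le_mul_of_nonneg_right h2 (norm_nonneg h)
      _ = ‖h‖ := one_mul _
      _ ≤ ε := hdist
    have hPh_sq : ‖Ph‖^2 ≤ ε^2 := by nlinarith [norm_nonneg Ph, hP_le, hεpos.le]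
    have hframePh := hframe j Ph hPhmem
    rw [← huu] at hframePh
    have hsu : Summable uu := by
      by_contra hns
      have h0 : ∑' k, uu k = 0 := tsum_eq_zero_of_not_summable hns
      have hlow2 := hframePh.1
      rw [h0] at hlow2
      have hPh0 : Ph = 0 := by
        have : ‖Ph‖^2 ≤ 0 := by nlinarith
        have : ‖Ph‖ = 0 := by nlinarith [norm_nonneg Ph, sq_nonneg ‖Ph‖]
        exact norm_eq_zero.mp this
      apply hns
      have huu0 : uu = fun _ => (0:ℝ) := by
        funext k
        rw [huu]
        simp only []
        have hz : (∫ t : ℝ, Ph t * (starRingEnd ℂ) (chirpDyadic A B D p φ j k t)) = 0 := by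
          rw [hPh0]
          have hzz : (∫ t : ℝ, (0 : Lp ℂ 2 (volume : Measure ℝ)) t
              * (starRingEnd ℂ) (chirpDyadic A B D p φ j k t)) = ∫ t : ℝ, (0:ℂ) := by
            apply integral_congr_ae
            filter_upwards [Lp.coeFn_zero ℂ 2 (volume : Measure ℝ)] with t ht
            rw [ht, Pi.zero_apply, zero_mul]
          rw [hzz, integral_zero]
        rw [hz]
        simp
      rw [huu0]
      exact summable_zero
    have hsum_u : ∑' k, uu k ≤ A₂ * ε^2 :=
      le_trans hframePh.2 (mul_le_mul_of_nonneg_left hPh_sq hA₂.le)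
    -- bound for the g part
    have hφint : Integrable (fun u : ℝ => ‖φ u‖^2) volume := by
      have := hφ.integrable_norm_rpow two_ne_zero ENNReal.ofNat_ne_top
      simpa [Real.rpow_natCast] using this
    have hb : ∀ k : ℤ, tt k ≤ Cg * aA (-k) := by
      intro k
      rw [htt, haA]
      simp only []
      refine le_trans (holder_est A B D p φ hφ j k (hmem j k) g hgmem hgint R hRpos hsupp) ?_
      refine mul_le_mul_of_nonneg_left ?_ hCgnn
      refine setIntegral_mono_set hφint.integrableOn
        (Filter.Eventually.of_forall fun u => sq_nonneg _) ?_
      refine HasSubset.Subset.eventuallyLE ?_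
      have hcRnn : 0 ≤ c * R := le_of_lt (mul_pos hcpos hRpos)
      push_cast
      exact Set.Icc_subset_Icc (by linarith) (by linarith)
    have hsa : Summable (fun k : ℤ => aA (-k)) := by
      have h1 : Summable (aA ∘ (Equiv.neg ℤ)) := (Equiv.neg ℤ).summable_iff.mpr hsumm
      exact h1
    have hstt : Summable tt :=
      Summable.of_nonneg_of_le (fun k => by rw [htt]; exact sq_nonneg _)
        hb (hsa.mul_left Cg)
    have hsum_t : ∑' k, tt k ≤ Cg * δ := by
      calc ∑' k, tt k ≤ ∑' k : ℤ, Cg * aA (-k) := Summable.tsum_le_tsum hb hstt (hsa.mul_left Cg)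
      _ = Cg * ∑' k : ℤ, aA (-k) := tsum_mul_left
      _ = Cg * ∑' k : ℤ, aA k := by
          rw [show (∑' k : ℤ, aA (-k)) = ∑' k : ℤ, aA ((Equiv.neg ℤ) k) from rfl,
            (Equiv.neg ℤ).tsum_eq aA]
      _ ≤ Cg * δ := mul_le_mul_of_nonneg_left htsum hCgnn
    -- conclusion
    have hlow := (hframe j f (hf j)).1
    rw [← hs] at hlow
    by_cases hss : Summable s
    · have hstep : ∑' k, s k ≤ 2 * (∑' k, tt k) + 2 * (∑' k, uu k) := by
        have h1 : ∑' k, s k ≤ ∑' k, (2 * tt k + 2 * uu k) :=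
          Summable.tsum_le_tsum hpt hss ((hstt.mul_left 2).add (hsu.mul_left 2))
        rwa [Summable.tsum_add (hstt.mul_left 2) (hsu.mul_left 2), tsum_mul_left, tsum_mul_left] at h1
      have hfinal : η ≤ 2 * (Cg * δ) + 2 * (A₂ * ε^2) := by
        calc η ≤ ∑' k, s k := hlow
        _ ≤ 2 * (∑' k, tt k) + 2 * (∑' k, uu k) := hstep
        _ ≤ 2 * (Cg * δ) + 2 * (A₂ * ε^2) := by
            have := hsum_t; have := hsum_u
            nlinarith [hsum_t, hsum_u]
      have k1 : Cg * δ ≤ η/4 := by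
        rw [hδ, mul_div_assoc']
        rw [div_le_div_iff₀ (by linarith : (0:ℝ) < 4*(Cg+1)) (by norm_num : (0:ℝ) < 4)]
        nlinarith [hηpos.le, hCgnn]
      have k2 : A₂ * ε^2 ≤ η/8 := by
        rw [hεsq, mul_div_assoc']
        rw [div_le_div_iff₀ (by linarith : (0:ℝ) < 8*(A₂+1)) (by norm_num : (0:ℝ) < 8)]
        nlinarith [hηpos.le, hA₂.le]
      linarith
    · rw [tsum_eq_zero_of_not_summable hss] at hlow
      nlinarith

  · rintro rfl j
    exact Submodule.zero_mem _
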